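/- Let H be finite and let C : H → [0,1] and F : H → [0,1] be true cost and FNR functions, with empirical versions Ĉ and F̂ satisfying |Ĉ(h) − C(h)| ≤ ε and |F̂(h) − F(h)| ≤ ε for all h ∈ H. If h* minimizes C over the feasible set {h : F(h) ≤ η} (assumed nonempty) and ĥ minimizes Ĉ over {h : F̂(h) ≤ η − ε}, and moreover F(h*) ≤ η − 2ε, then F(ĥ) ≤ η and C(ĥ) ≤ C(h*) + 2ε. -/
import Mathlib

theorem stmt_2 {H : Type*} [Fintype H] [Nonempty H]
    (C F Chat Fhat : H → ℝ) (η ε : ℝ) (hε : 0 < ε) (hη : 0 ≤ η - 2 * ε)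
    (hCbd : ∀ h, C h ∈ Set.Icc (0 : ℝ) 1) (hFbd : ∀ h, F h ∈ Set.Icc (0 : ℝ) 1)
    (hCapprox : ∀ h, |Chat h - C h| ≤ ε) (hFapprox : ∀ h, |Fhat h - F h| ≤ ε)
    (hstar hhat : H)
    (hstar_feas : F hstar ≤ η - 2 * ε)
    (hstar_min : ∀ h, F h ≤ η → C hstar ≤ C h)
    (hhat_feas : Fhat hhat ≤ η - ε)
    (hhat_min : ∀ h, Fhat h ≤ η - ε → Chat hhat ≤ Chat h) :
    F hhat ≤ η ∧ C hhat ≤ C hstar + 2 * ε := by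
  have h1 := abs_le.mp (hFapprox hhat)
  have h2 := abs_le.mp (hFapprox hstar)
  have h3 := abs_le.mp (hCapprox hhat)
  have h4 := abs_le.mp (hCapprox hstar)
  have hfeas : Fhat hstar ≤ η - ε := by linarith [h2.2]
  have hmin := hhat_min hstar hfeas
  exact ⟨by linarith [h1.1], by linarith [h3.1, h4.2]⟩
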